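/- Fix a natural number q ≥ 1. Suppose that for every natural number m there is given an element ρ_m of F satisfying ρ_m ∼ y^{q+m+1}, that is, ρ_m = u_m · y^{q+m+1} + σ_m where u_m is a unit of R and σ_m lies in the R-span of the monomials x^i y^j z^k with j < q+m+1. Let S be the R-submodule of F generated by the elements x^i y^m z^k (z − x) for all i, k, m ≥ 0 together with the elements x^i ρ_m for all i, m ≥ 0. Then the images in F/S of the monomials in the set {x^l y^m : l ≥ 0, 0 ≤ m ≤ q} are linearly independent over R; equivalently, the intersection of S with the R-span of {x^l y^m : l ≥ 0, 0 ≤ m ≤ q} is zero. -/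

import Mathlib

open MvPolynomial

/-- `R` is the Laurent polynomial ring `ℤ[t,t⁻¹]`. -/
noncomputable abbrev R : Type := LaurentPolynomial ℤ

/-- `F` is the polynomial ring `R[x,y,z]`, with `x = X 0`, `y = X 1`, `z = X 2`,
regarded as an `R`-module with basis the monomials `x^l y^m z^n`. -/
noncomputable abbrev F : Type := MvPolynomial (Fin 3) R

noncomputable abbrev A : Type := Polynomial R
noncomputable abbrev B : Type := Polynomial A

noncomputable def phi : F →ₐ[R] B :=
  MvPolynomial.aeval (S₁ := B) ![Polynomial.C Polynomial.X, Polynomial.X, Polynomial.C Polynomial.X]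

@[simp] lemma phi_X0 : phi (X 0) = Polynomial.C Polynomial.X := by simp [phi]
@[simp] lemma phi_X1 : phi (X 1) = Polynomial.X := by simp [phi]
@[simp] lemma phi_X2 : phi (X 2) = Polynomial.C Polynomial.X := by simp [phi]

lemma phi_mono (i j k : ℕ) :
    phi ((X 0 : F) ^ i * X 1 ^ j * X 2 ^ k) =
      Polynomial.C (Polynomial.X ^ (i + k)) * Polynomial.X ^ j := by
  simp only [map_mul, map_pow, phi_X0, phi_X1, phi_X2, pow_add]
  ring

lemma phi_rho (q : ℕ) (ρ : ℕ → F)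
    (hρ : ∀ m : ℕ, ∃ u : Rˣ,
      ρ m - (u : R) • (X 1 : F) ^ (q + m + 1) ∈
        Submodule.span R
          {p : F | ∃ i j k : ℕ, j < q + m + 1 ∧ p = X 0 ^ i * X 1 ^ j * X 2 ^ k}) :
    ∀ m : ℕ, ∃ u : Rˣ,
      (phi (ρ m)).coeff (q + m + 1) = Polynomial.C (u : R) ∧
      ∀ n, q + m + 1 < n → (phi (ρ m)).coeff n = 0 := by
  intro m
  obtain ⟨u, hu⟩ := hρ m
  set N := q + m + 1 with hN
  have hdeg : (phi (ρ m - (u : R) • (X 1 : F) ^ N)).degree < (N : WithBot ℕ) := by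
    have hsub : ρ m - (u : R) • (X 1 : F) ^ N ∈
        Submodule.comap phi.toLinearMap
          ((Polynomial.degreeLT A N).restrictScalars R) := by
      refine Submodule.span_le.mpr ?_ hu
      rintro p ⟨i, j, k, hj, rfl⟩
      simp only [SetLike.mem_coe, Submodule.mem_comap, Submodule.restrictScalars_mem,
        AlgHom.toLinearMap_apply, Polynomial.mem_degreeLT]
      rw [phi_mono]
      calc (Polynomial.C (Polynomial.X ^ (i + k)) * Polynomial.X ^ j).degree ≤ (j : WithBot ℕ) :=
            Polynomial.degree_C_mul_X_pow_le j _
        _ < (N : WithBot ℕ) := by exact_mod_cast hj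
    simpa [Polynomial.mem_degreeLT] using hsub
  have hlow : ∀ n, N ≤ n → (phi (ρ m - (u : R) • (X 1 : F) ^ N)).coeff n = 0 := by
    intro n hn
    refine Polynomial.coeff_eq_zero_of_degree_lt (lt_of_lt_of_le hdeg ?_)
    exact_mod_cast Nat.cast_le.mpr hn
  have hsplit : phi (ρ m) = (u : R) • (Polynomial.X : B) ^ N +
      phi (ρ m - (u : R) • (X 1 : F) ^ N) := by
    rw [map_sub, map_smul, map_pow, phi_X1]; ring
  refine ⟨u, ?_, ?_⟩
  · rw [hsplit, Polynomial.coeff_add, Polynomial.coeff_smul, Polynomial.coeff_X_pow,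
      if_pos rfl, hlow N le_rfl, add_zero]
    rw [Polynomial.smul_eq_C_mul, mul_one]
  · intro n hn
    rw [hsplit, Polynomial.coeff_add, Polynomial.coeff_smul, Polynomial.coeff_X_pow,
      if_neg (by omega), hlow n (le_of_lt hn), add_zero, smul_zero]

/-- Fix `q ≥ 1`.  Suppose for every `m` we are given `ρ m ∼ y^{q+m+1}`, i.e.
`ρ m = u_m • y^{q+m+1} + σ_m` with `u_m` a unit of `R` and `σ_m` in the `R`-span of
the monomials `x^i y^j z^k` with `j < q+m+1`.  Let `S` be the `R`-submodule of `F`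
generated by the elements `x^i y^m z^k (z − x)` together with the elements `x^i ρ_m`.
Then the images in `F ⧸ S` of the monomials `{x^l y^m : m ≤ q}` are linearly
independent over `R`. -/

theorem images_linearIndependent (q : ℕ) (hq : 1 ≤ q) (ρ : ℕ → F)
    (hρ : ∀ m : ℕ, ∃ u : Rˣ,
      ρ m - (u : R) • (X 1 : F) ^ (q + m + 1) ∈
        Submodule.span R
          {p : F | ∃ i j k : ℕ, j < q + m + 1 ∧ p = X 0 ^ i * X 1 ^ j * X 2 ^ k})
    (S : Submodule R F)
    (hS : S = Submodule.span R
        ({p : F | ∃ i m k : ℕ, p = X 0 ^ i * X 1 ^ m * X 2 ^ k * (X 2 - X 0)} ∪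
         {p : F | ∃ i m : ℕ, p = X 0 ^ i * ρ m})) :
    LinearIndependent R
      (fun lm : ℕ × {m : ℕ // m ≤ q} =>
        (Submodule.Quotient.mk ((X 0 : F) ^ lm.1 * X 1 ^ (lm.2 : ℕ)) : F ⧸ S)) := by
  classical
  rw [linearIndependent_iff]
  intro l hl
  set v : ℕ × {m : ℕ // m ≤ q} → F := fun lm => X 0 ^ lm.1 * X 1 ^ (lm.2 : ℕ) with hv
  set p : F := Finsupp.linearCombination R v l with hpdef
  -- Step 1 : p ∈ S
  have hp : p ∈ S := by
    rw [← Submodule.Quotient.mk_eq_zero S]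
    have h1 := Finsupp.apply_linearCombination R S.mkQ v l
    rw [Submodule.mkQ_apply] at h1
    rw [hpdef, h1]
    exact hl
  -- Step 2 : phi p lies in the A-span of the phi (ρ m)
  have hw : phi p ∈ Submodule.span A (Set.range fun m => phi (ρ m)) := by
    have hle : S ≤ Submodule.comap phi.toLinearMap
        ((Submodule.span A (Set.range fun m => phi (ρ m))).restrictScalars R) := by
      rw [hS]
      refine Submodule.span_le.mpr ?_
      rintro w (⟨i, m, k, rfl⟩ | ⟨i, m, rfl⟩) <;>
        simp only [SetLike.mem_coe, Submodule.mem_comap, AlgHom.toLinearMap_apply,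
          Submodule.restrictScalars_mem]
      · have hz : phi ((X 0 : F) ^ i * X 1 ^ m * X 2 ^ k * (X 2 - X 0)) = 0 := by
          rw [map_mul, map_sub, phi_X2, phi_X0, sub_self, mul_zero]
        rw [hz]; exact Submodule.zero_mem _
      · have hz : phi ((X 0 : F) ^ i * ρ m) = (Polynomial.X ^ i : A) • phi (ρ m) := by
          rw [map_mul, map_pow, phi_X0, Polynomial.smul_eq_C_mul, map_pow]
        rw [hz]
        exact Submodule.smul_mem _ _ (Submodule.subset_span ⟨m, rfl⟩)
    exact hle hp
  -- Step 3 : coefficient bound for phi p in degrees > q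
  have hphip : phi p = l.sum fun lm r => r • phi (v lm) := by
    have h1 := Finsupp.apply_linearCombination R phi.toLinearMap v l
    simp only [Finsupp.linearCombination_apply] at h1
    rw [hpdef, Finsupp.linearCombination_apply]
    simpa only [AlgHom.toLinearMap_apply, Function.comp] using h1
  have hphiv : ∀ lm : ℕ × {m : ℕ // m ≤ q},
      phi (v lm) = Polynomial.C (Polynomial.X ^ lm.1) * Polynomial.X ^ (lm.2 : ℕ) := by
    intro lm
    have : v lm = (X 0 : F) ^ lm.1 * X 1 ^ (lm.2 : ℕ) * X 2 ^ 0 := by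
      rw [pow_zero, mul_one]
    rw [this, phi_mono, Nat.add_zero]
  have hcb : ∀ n, q < n → (phi p).coeff n = 0 := by
    intro n hn
    rw [hphip, ← Polynomial.lcoeff_apply, map_finsuppSum (Polynomial.lcoeff A n)]
    rw [Finsupp.sum]
    refine Finset.sum_eq_zero fun lm _ => ?_
    simp only [Polynomial.lcoeff_apply, Polynomial.coeff_smul, hphiv,
      Polynomial.coeff_C_mul, Polynomial.coeff_X_pow]
    rw [if_neg (by have := lm.2.2; omega), mul_zero, smul_zero]
  -- Step 4 : representation of phi p over the phi (ρ m)
  obtain ⟨c, hc⟩ := Finsupp.mem_span_range_iff_exists_finsupp.mp hw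
  have key := phi_rho q ρ hρ
  choose u hu1 hu2 using key
  -- Step 5 : c = 0, hence phi p = 0
  have hc0 : c = 0 := by
    by_contra hne
    have hsupp : c.support.Nonempty := Finsupp.support_nonempty_iff.mpr hne
    set m₀ := c.support.max' hsupp with hm₀def
    have hm₀ : m₀ ∈ c.support := Finset.max'_mem _ _
    have h1 : (c.sum fun m a => a • phi (ρ m)).coeff (q + m₀ + 1) = 0 := by
      rw [hc]; exact hcb _ (by omega)
    rw [← Polynomial.lcoeff_apply, map_finsuppSum (Polynomial.lcoeff A (q + m₀ + 1))] at h1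
    simp only [Polynomial.lcoeff_apply, Polynomial.coeff_smul, smul_eq_mul] at h1
    rw [Finsupp.sum, Finset.sum_eq_single_of_mem m₀ hm₀] at h1
    · rw [hu1 m₀] at h1
      have hC : c m₀ = 0 := by
        have := Units.mul_left_eq_zero
          (Units.map (Polynomial.C : R →+* A).toMonoidHom (u m₀)) (a := c m₀)
        simp only [Units.coe_map, RingHom.toMonoidHom_eq_coe, MonoidHom.coe_coe] at this
        exact this.mp h1
      exact Finsupp.mem_support_iff.mp hm₀ hC
    · intro m hm hmne
      have hlt : m < m₀ := lt_of_le_of_ne (Finset.le_max' _ _ hm) hmne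
      rw [hu2 m _ (by omega), mul_zero]
  have hw0 : phi p = 0 := by
    rw [← hc, hc0, Finsupp.sum_zero_index]
  -- Step 6 : extract the coefficients of l
  refine Finsupp.ext fun lm0 => ?_
  obtain ⟨l₀, m₀⟩ := lm0
  have hext : ((phi p).coeff (m₀ : ℕ)).coeff l₀ = 0 := by rw [hw0]; simp
  rw [hphip] at hext
  rw [← Polynomial.lcoeff_apply, ← Polynomial.lcoeff_apply,
    map_finsuppSum (Polynomial.lcoeff A (m₀ : ℕ)),
    map_finsuppSum (Polynomial.lcoeff R l₀)] at hext
  have hterm : ∀ lm : ℕ × {m : ℕ // m ≤ q}, ∀ r : R,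
      (Polynomial.lcoeff R l₀) ((Polynomial.lcoeff A (m₀ : ℕ)) (r • phi (v lm))) =
      if lm = (l₀, m₀) then r else 0 := by
    intro lm r
    have hstep : (Polynomial.lcoeff A (m₀ : ℕ)) (r • phi (v lm)) =
        r • (Polynomial.X ^ lm.1 * if ((m₀ : ℕ)) = (lm.2 : ℕ) then 1 else 0 : A) := by
      rw [Polynomial.lcoeff_apply, Polynomial.coeff_smul, hphiv,
        Polynomial.coeff_C_mul, Polynomial.coeff_X_pow]
    by_cases h2 : ((m₀ : ℕ)) = (lm.2 : ℕ)
    · rw [hstep, if_pos h2, mul_one, Polynomial.lcoeff_apply, Polynomial.coeff_smul,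
        Polynomial.coeff_X_pow]
      by_cases h1 : l₀ = lm.1
      · rw [if_pos h1, smul_eq_mul, mul_one,
          if_pos (Prod.ext h1.symm (Subtype.ext h2.symm))]
      · rw [if_neg h1, smul_zero,
          if_neg (by rintro rfl; exact h1 rfl)]
    · rw [hstep, if_neg h2, mul_zero, smul_zero, map_zero,
        if_neg (by rintro rfl; exact h2 rfl)]
  rw [Finsupp.sum_congr (g2 := fun lm r => if lm = (l₀, m₀) then r else 0)
      (fun lm _ => hterm lm (l lm)),
    Finsupp.sum_ite_eq' l (l₀, m₀) (fun _ r => r)] at hext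
  show l (l₀, m₀) = 0
  by_cases hmem : (l₀, m₀) ∈ l.support
  · rw [if_pos hmem] at hext
    exact hext
  · exact Finsupp.notMem_support_iff.mp hmem
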